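/- Let A be a bialgebra with a skew antipode S̄ (Σ S̄(a_2)a_1 = Σ a_2 S̄(a_1) = ε(a)1) and let M be a left-right Hopf module over A. Then M is isomorphic, as a left-right Hopf module, to M^{co A} ⊗ A, where M^{co A} = {m ∈ M : ρ(m) = m⊗1} and M^{co A}⊗A carries the structure a·(v⊗b) = v⊗ab, ρ(v⊗a) = Σ v⊗a_1⊗a_2. -/

import Mathlib

set_option maxHeartbeats 1000000
set_option synthInstance.maxHeartbeats 200000

open TensorProduct
noncomputable section

namespace PS

variable (k : Type) [Field k] (A : Type) [Ring A] [Bialgebra k A]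

/-- Left-nested tensor powers with base `B`: `pwr B n = B ⊗ A ⊗ ⋯ ⊗ A` (`n` copies of `A`). -/
def pwr (B : ModuleCat k) : ℕ → ModuleCat k
  | 0 => B
  | n + 1 => ModuleCat.of k (pwr B n ⊗[k] A)

/-- `A^{⊗ n}` realized as `pwr k n`, i.e. `k ⊗ A ⊗ ⋯ ⊗ A`. -/
abbrev Pk (n : ℕ) : ModuleCat k := pwr k A (ModuleCat.of k k) n

abbrev μA : A ⊗[k] A →ₗ[k] A := LinearMap.mul' k A
abbrev ΔA : A →ₗ[k] A ⊗[k] A := Coalgebra.comul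
abbrev εA : A →ₗ[k] k := Coalgebra.counit

/-- Multiplication of the tensorands in slots `i` and `i+1` (`1 ≤ i ≤ n`);
junk (zero map) for other `i`. -/
def mulP : (n : ℕ) → (i : ℕ) → ((Pk k A (n+1) : Type) →ₗ[k] Pk k A n)
  | 0, _ => 0
  | n + 1, i =>
      if i = n + 1 then
        (TensorProduct.map (LinearMap.id : (Pk k A n : Type) →ₗ[k] Pk k A n) (μA k A)).comp
          (TensorProduct.assoc k (Pk k A n) A A).toLinearMap
      else
        TensorProduct.map (mulP n i) (LinearMap.id : A →ₗ[k] A)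

/-- Insert an `A`-factor at the innermost slot (slot 1). -/
def insP : (n : ℕ) → (A ⊗[k] (Pk k A n : Type)) ≃ₗ[k] (Pk k A (n+1) : Type)
  | 0 => TensorProduct.comm k A k
  | n + 1 =>
      (TensorProduct.assoc k A (Pk k A n) A).symm.trans
        (TensorProduct.congr (insP n) (LinearEquiv.refl k A))

section NM

variable {N : Type} [AddCommGroup N] [Module k N]

/-- The left diagonal action of `A` on `N ⊗ A^{⊗ p}` built from a base action `ωN`. -/
def ldiag (ωN : A ⊗[k] N →ₗ[k] N) :
    (p : ℕ) → (A ⊗[k] (pwr k A (ModuleCat.of k N) p : Type) →ₗ[k] pwr k A (ModuleCat.of k N) p)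
  | 0 => ωN
  | p + 1 =>
      (TensorProduct.map (ldiag ωN p) (μA k A)).comp <|
        ((TensorProduct.tensorTensorTensorComm k A A
            (pwr k A (ModuleCat.of k N) p : Type) A).toLinearMap).comp
          (TensorProduct.map (ΔA k A) (LinearMap.id :
            ((pwr k A (ModuleCat.of k N) p : Type) ⊗[k] A) →ₗ[k] _))

/-- Right diagonal multiplication on the `A`-slots of `N ⊗ A^{⊗ p}` (counit on the base). -/
def rdiagE : (p : ℕ) →
    ((pwr k A (ModuleCat.of k N) p : Type) ⊗[k] A →ₗ[k] pwr k A (ModuleCat.of k N) p)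
  | 0 => (TensorProduct.rid k N).toLinearMap.comp
      (TensorProduct.map (LinearMap.id : N →ₗ[k] N) (εA k A))
  | p + 1 =>
      (TensorProduct.map (rdiagE p) (μA k A)).comp <|
        ((TensorProduct.tensorTensorTensorComm k
            (pwr k A (ModuleCat.of k N) p : Type) A A A).toLinearMap).comp
          (TensorProduct.map
            (LinearMap.id : ((pwr k A (ModuleCat.of k N) p : Type) ⊗[k] A) →ₗ[k] _) (ΔA k A))

/-- Right diagonal action on `N ⊗ A^{⊗ p}` built from a base (right) action `ωNr`. -/
def rdiagAct (ωNr : N ⊗[k] A →ₗ[k] N) : (p : ℕ) →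
    ((pwr k A (ModuleCat.of k N) p : Type) ⊗[k] A →ₗ[k] pwr k A (ModuleCat.of k N) p)
  | 0 => ωNr
  | p + 1 =>
      (TensorProduct.map (rdiagAct ωNr p) (μA k A)).comp <|
        ((TensorProduct.tensorTensorTensorComm k
            (pwr k A (ModuleCat.of k N) p : Type) A A A).toLinearMap).comp
          (TensorProduct.map
            (LinearMap.id : ((pwr k A (ModuleCat.of k N) p : Type) ⊗[k] A) →ₗ[k] _) (ΔA k A))

end NM

/-- `dL : A^{⊗ n} → A ⊗ A^{⊗ n}`, `a^1 ⊗ ⋯ ⊗ a^n ↦ Σ (a^1)_1 ⋯ (a^n)_1 ⊗ ((a^1)_2 ⊗ ⋯ ⊗ (a^n)_2)`. -/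
def dL : (n : ℕ) → ((Pk k A n : Type) →ₗ[k] A ⊗[k] (Pk k A n : Type))
  | 0 => (TensorProduct.map (Algebra.linearMap k A) (LinearMap.id : k →ₗ[k] k)).comp
      (TensorProduct.lid k k).symm.toLinearMap
  | n + 1 =>
      (TensorProduct.map (μA k A)
          (LinearMap.id : ((Pk k A n : Type) ⊗[k] A) →ₗ[k] _)).comp <|
        ((TensorProduct.tensorTensorTensorComm k A (Pk k A n : Type) A A).toLinearMap).comp
          (TensorProduct.map (dL n) (ΔA k A))

/-- `dR : A^{⊗ n} → A^{⊗ n} ⊗ A`, `a^1 ⊗ ⋯ ⊗ a^n ↦ Σ ((a^1)_1 ⊗ ⋯ ⊗ (a^n)_1) ⊗ (a^1)_2 ⋯ (a^n)_2`. -/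
def dR : (n : ℕ) → ((Pk k A n : Type) →ₗ[k] (Pk k A n : Type) ⊗[k] A)
  | 0 => (TensorProduct.map (LinearMap.id : k →ₗ[k] k) (Algebra.linearMap k A)).comp
      (TensorProduct.rid k k).symm.toLinearMap
  | n + 1 =>
      (TensorProduct.map
          (LinearMap.id : ((Pk k A n : Type) ⊗[k] A) →ₗ[k] _) (μA k A)).comp <|
        ((TensorProduct.tensorTensorTensorComm k (Pk k A n : Type) A A A).toLinearMap).comp
          (TensorProduct.map (dR n) (ΔA k A))

section Base

variable {N : Type} [AddCommGroup N] [Module k N]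

/-- Apply `ρN : N → N ⊗ A` to the base of `N ⊗ A^{⊗ p}`. -/
def rhoBase (ρN : N →ₗ[k] N ⊗[k] A) : (p : ℕ) →
    ((pwr k A (ModuleCat.of k N) p : Type) →ₗ[k] pwr k A (ModuleCat.of k (N ⊗[k] A)) p)
  | 0 => ρN
  | p + 1 => TensorProduct.map (rhoBase ρN p) (LinearMap.id : A →ₗ[k] A)

/-- Reinterpret `(N ⊗ A) ⊗ A^{⊗ p}` as `N ⊗ A^{⊗ (p+1)}`. -/
def shiftB : (p : ℕ) →
    ((pwr k A (ModuleCat.of k (N ⊗[k] A)) p : Type) ≃ₗ[k] pwr k A (ModuleCat.of k N) (p+1))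
  | 0 => LinearEquiv.refl k (N ⊗[k] A)
  | p + 1 => TensorProduct.congr (shiftB p) (LinearEquiv.refl k A)

/-- Multiply the `A`-component of the base `N ⊗ A` on the right by an element of `A`. -/
def rmulBase : (p : ℕ) →
    ((pwr k A (ModuleCat.of k (N ⊗[k] A)) p : Type) ⊗[k] A →ₗ[k]
      pwr k A (ModuleCat.of k (N ⊗[k] A)) p)
  | 0 => (TensorProduct.map (LinearMap.id : N →ₗ[k] N) (μA k A)).comp
      (TensorProduct.assoc k N A A).toLinearMap
  | p + 1 =>
      (TensorProduct.map (rmulBase p) (LinearMap.id : A →ₗ[k] A)).comp <|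
        ((TensorProduct.assoc k (pwr k A (ModuleCat.of k (N ⊗[k] A)) p : Type) A A).symm.toLinearMap).comp <|
          (TensorProduct.map
            (LinearMap.id : (pwr k A (ModuleCat.of k (N ⊗[k] A)) p : Type) →ₗ[k] _)
            (TensorProduct.comm k A A).toLinearMap).comp
            (TensorProduct.assoc k
              (pwr k A (ModuleCat.of k (N ⊗[k] A)) p : Type) A A).toLinearMap

/-- Apply the counit to the `A`-component of the base `N ⊗ A`. -/
def epsBase : (p : ℕ) →
    ((pwr k A (ModuleCat.of k (N ⊗[k] A)) p : Type) →ₗ[k] pwr k A (ModuleCat.of k N) p)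
  | 0 => (TensorProduct.rid k N).toLinearMap.comp
      (TensorProduct.map (LinearMap.id : N →ₗ[k] N) (εA k A))
  | p + 1 => TensorProduct.map (epsBase p) (LinearMap.id : A →ₗ[k] A)

/-- Apply `Δ` on the `i`-th `A`-slot (`1 ≤ i ≤ p`) of `N ⊗ A^{⊗ p}`; junk otherwise. -/
def comulAt : (p : ℕ) → (i : ℕ) →
    ((pwr k A (ModuleCat.of k N) p : Type) →ₗ[k] pwr k A (ModuleCat.of k N) (p+1))
  | 0, _ => 0
  | p + 1, i =>
      if i = p + 1 then
        ((TensorProduct.assoc k (pwr k A (ModuleCat.of k N) p : Type) A A).symm.toLinearMap).comp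
          (TensorProduct.map
            (LinearMap.id : (pwr k A (ModuleCat.of k N) p : Type) →ₗ[k] _) (ΔA k A))
      else
        TensorProduct.map (comulAt p i) (LinearMap.id : A →ₗ[k] A)

/-- Left coaction on `N ⊗ A^{⊗ p}` coming from a left coaction on the base. -/
def lcoBase (ρNl : N →ₗ[k] A ⊗[k] N) : (p : ℕ) →
    ((pwr k A (ModuleCat.of k N) p : Type) →ₗ[k]
      A ⊗[k] (pwr k A (ModuleCat.of k N) p : Type))
  | 0 => ρNl
  | p + 1 =>
      ((TensorProduct.assoc k A (pwr k A (ModuleCat.of k N) p : Type) A).toLinearMap).comp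
        (TensorProduct.map (lcoBase ρNl p) (LinearMap.id : A →ₗ[k] A))

end Base

section Bicomplex

variable {M N : Type} [AddCommGroup M] [Module k M] [AddCommGroup N] [Module k N]

/-- `A^{⊗ n} ⊗ M`, the domain of the `(n,p)` cochains. -/
abbrev Dm (M : Type) [AddCommGroup M] [Module k M] (n : ℕ) : Type :=
  (Pk k A n : Type) ⊗[k] M

/-- `N ⊗ A^{⊗ p}`. -/
abbrev Cd (N : Type) [AddCommGroup N] [Module k N] (p : ℕ) : Type :=
  (pwr k A (ModuleCat.of k N) p : Type)

/-- The space of `(n,p)` cochains `Hom(A^{⊗ n} ⊗ M, N ⊗ A^{⊗ p})`. -/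
abbrev Yc (M N : Type) [AddCommGroup M] [Module k M] [AddCommGroup N] [Module k N]
    (n p : ℕ) : Type := Dm k A M n →ₗ[k] Cd k A N p

variable (ωM : A ⊗[k] M →ₗ[k] M) (ρM : M →ₗ[k] M ⊗[k] A)
variable (ωN : A ⊗[k] N →ₗ[k] N) (ρN : N →ₗ[k] N ⊗[k] A)

/-- `b_0`: the face using the diagonal left action of `a^1` on `N ⊗ A^{⊗ p}`. -/
def face0 (n p : ℕ) (f : Yc k A M N n p) : Yc k A M N (n+1) p :=
  (ldiag k A ωN p).comp <|
    (TensorProduct.map (LinearMap.id : A →ₗ[k] A) f).comp <|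
      ((TensorProduct.assoc k A (Pk k A n : Type) M).toLinearMap).comp
        (TensorProduct.map (insP k A n).symm.toLinearMap (LinearMap.id : M →ₗ[k] M))

/-- `b_i`, `1 ≤ i ≤ n`: multiply the adjacent arguments `a^i a^{i+1}`. -/
def faceMid (n p : ℕ) (i : ℕ) (f : Yc k A M N n p) : Yc k A M N (n+1) p :=
  f.comp (TensorProduct.map (mulP k A n i) (LinearMap.id : M →ₗ[k] M))

/-- `b_{n+1}` in the Hopf-module case: `f(a^1 ⊗ ⋯ ⊗ a^n ⊗ a^{n+1}·m)`. -/
def faceLastH (n p : ℕ) (f : Yc k A M N n p) : Yc k A M N (n+1) p :=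
  f.comp <|
    (TensorProduct.map (LinearMap.id : (Pk k A n : Type) →ₗ[k] _) ωM).comp
      (TensorProduct.assoc k (Pk k A n : Type) A M).toLinearMap

/-- `b_{n+1}` in the Yetter-Drinfel'd case. -/
def faceLastYD (n p : ℕ) (f : Yc k A M N n p) : Yc k A M N (n+1) p :=
  (rdiagE k A p).comp <|
    ((TensorProduct.comm k A (Cd k A N p)).toLinearMap).comp <|
      (TensorProduct.map (LinearMap.id : A →ₗ[k] A)
        (f.comp (TensorProduct.map (LinearMap.id : (Pk k A n : Type) →ₗ[k] _) ωM))).comp <|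
        ((TensorProduct.leftComm k (Pk k A n : Type) A (A ⊗[k] M)).toLinearMap).comp <|
          (TensorProduct.map (LinearMap.id : (Pk k A n : Type) →ₗ[k] _)
            (TensorProduct.assoc k A A M).toLinearMap).comp <|
            ((TensorProduct.assoc k (Pk k A n : Type) (A ⊗[k] A) M).toLinearMap).comp
              (TensorProduct.map
                (TensorProduct.map (LinearMap.id : (Pk k A n : Type) →ₗ[k] _) (ΔA k A))
                (LinearMap.id : M →ₗ[k] M))

/-- The Yetter-Drinfel'd horizontal faces `b_i^{n,p}`, `0 ≤ i ≤ n+1`. -/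
def bYD (n p : ℕ) (i : ℕ) (f : Yc k A M N n p) : Yc k A M N (n+1) p :=
  if i = 0 then face0 k A ωN n p f
  else if i ≤ n then faceMid k A n p i f
  else faceLastYD k A ωM n p f

/-- The Hopf-module horizontal faces `b_i^{n,p}`, `0 ≤ i ≤ n+1`. -/
def bH (n p : ℕ) (i : ℕ) (f : Yc k A M N n p) : Yc k A M N (n+1) p :=
  if i = 0 then face0 k A ωN n p f
  else if i ≤ n then faceMid k A n p i f
  else faceLastH k A ωM n p f

/-- `c_0` in the Hopf-module case: apply `ρ_N` to the `N`-component of the output. -/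
def cof0H (n p : ℕ) (f : Yc k A M N n p) : Yc k A M N n (p+1) :=
  ((shiftB k A p).toLinearMap).comp ((rhoBase k A ρN p).comp f)

/-- `c_0` in the Yetter-Drinfel'd case. -/
def cof0YD (n p : ℕ) (f : Yc k A M N n p) : Yc k A M N n (p+1) :=
  ((shiftB k A p).toLinearMap).comp <|
    (rmulBase k A p).comp <|
      ((TensorProduct.comm k A
          (pwr k A (ModuleCat.of k (N ⊗[k] A)) p : Type)).toLinearMap).comp <|
        (TensorProduct.map (LinearMap.id : A →ₗ[k] A) ((rhoBase k A ρN p).comp f)).comp <|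
          ((TensorProduct.assoc k A (Pk k A n : Type) M).toLinearMap).comp
            (TensorProduct.map (dL k A n) (LinearMap.id : M →ₗ[k] M))

/-- `c_{p+1}`: uses the right comodule structure of `M`. -/
def cofLast (n p : ℕ) (f : Yc k A M N n p) : Yc k A M N n (p+1) :=
  (TensorProduct.map f (μA k A)).comp <|
    ((TensorProduct.tensorTensorTensorComm k (Pk k A n : Type) A M A).toLinearMap).comp
      (TensorProduct.map (dR k A n) ρM)

/-- The Yetter-Drinfel'd vertical cofaces `c_j^{n,p}`, `0 ≤ j ≤ p+1`. -/
def cYD (n p : ℕ) (j : ℕ) (f : Yc k A M N n p) : Yc k A M N n (p+1) :=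
  if j = 0 then cof0YD k A ρN n p f
  else if j ≤ p then (comulAt k A p j).comp f
  else cofLast k A ρM n p f

/-- The Hopf-module vertical cofaces `c_j^{n,p}`, `0 ≤ j ≤ p+1`. -/
def cH (n p : ℕ) (j : ℕ) (f : Yc k A M N n p) : Yc k A M N n (p+1) :=
  if j = 0 then cof0H k A ρN n p f
  else if j ≤ p then (comulAt k A p j).comp f
  else cofLast k A ρM n p f

/-- The horizontal differential (Yetter-Drinfel'd case). -/
def dmYD (n p : ℕ) (f : Yc k A M N n p) : Yc k A M N (n+1) p :=
  ∑ i ∈ Finset.range (n+2), ((-1 : ℤ)^i) • bYD k A ωM ωN n p i f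

/-- The vertical differential (Yetter-Drinfel'd case). -/
def dcYD (n p : ℕ) (f : Yc k A M N n p) : Yc k A M N n (p+1) :=
  ∑ j ∈ Finset.range (p+2), ((-1 : ℤ)^j) • cYD k A ρM ρN n p j f

/-- The horizontal differential (Hopf-module case). -/
def dmH (n p : ℕ) (f : Yc k A M N n p) : Yc k A M N (n+1) p :=
  ∑ i ∈ Finset.range (n+2), ((-1 : ℤ)^i) • bH k A ωM ωN n p i f

/-- The vertical differential (Hopf-module case). -/
def dcH (n p : ℕ) (f : Yc k A M N n p) : Yc k A M N n (p+1) :=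
  ∑ j ∈ Finset.range (p+2), ((-1 : ℤ)^j) • cH k A ρM ρN n p j f

end Bicomplex

section Structures

variable {M : Type} [AddCommGroup M] [Module k M]

/-- `(M, ωM)` is a left `A`-module. -/
def IsModule (ωM : A ⊗[k] M →ₗ[k] M) : Prop :=
  (∀ m : M, ωM ((1 : A) ⊗ₜ m) = m) ∧
  ∀ (a b : A) (m : M), ωM (a ⊗ₜ ωM (b ⊗ₜ m)) = ωM ((a * b) ⊗ₜ m)

/-- `(M, ρM)` is a right `A`-comodule. -/
def IsComodule (ρM : M →ₗ[k] M ⊗[k] A) : Prop :=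
  ((TensorProduct.rid k M).toLinearMap.comp
      ((TensorProduct.map (LinearMap.id : M →ₗ[k] M) (εA k A)).comp ρM) = LinearMap.id) ∧
  (TensorProduct.map ρM (LinearMap.id : A →ₗ[k] A)).comp ρM =
    ((TensorProduct.assoc k M A A).symm.toLinearMap).comp
      ((TensorProduct.map (LinearMap.id : M →ₗ[k] M) (ΔA k A)).comp ρM)

/-- The map `a ⊗ m ↦ Σ a_1·m_0 ⊗ a_2 m_1`. -/
def hopfRHS (ωM : A ⊗[k] M →ₗ[k] M) (ρM : M →ₗ[k] M ⊗[k] A) :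
    A ⊗[k] M →ₗ[k] M ⊗[k] A :=
  (TensorProduct.map ωM (μA k A)).comp <|
    ((TensorProduct.tensorTensorTensorComm k A A M A).toLinearMap).comp
      (TensorProduct.map (ΔA k A) ρM)

/-- The map `a ⊗ m ↦ Σ (a_2·m)_0 ⊗ (a_2·m)_1 a_1`. -/
def ydLHS (ωM : A ⊗[k] M →ₗ[k] M) (ρM : M →ₗ[k] M ⊗[k] A) :
    A ⊗[k] M →ₗ[k] M ⊗[k] A :=
  (TensorProduct.map (LinearMap.id : M →ₗ[k] M) (μA k A)).comp <|
    ((TensorProduct.assoc k M A A).toLinearMap).comp <|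
      ((TensorProduct.comm k A (M ⊗[k] A)).toLinearMap).comp <|
        (TensorProduct.map (LinearMap.id : A →ₗ[k] A) (ρM.comp ωM)).comp <|
          ((TensorProduct.assoc k A A M).toLinearMap).comp
            (TensorProduct.map (ΔA k A) (LinearMap.id : M →ₗ[k] M))

/-- `(M, ωM, ρM)` is a left-right Yetter-Drinfel'd module over `A`. -/
def IsYetterDrinfeld (ωM : A ⊗[k] M →ₗ[k] M) (ρM : M →ₗ[k] M ⊗[k] A) : Prop :=
  IsModule k A ωM ∧ IsComodule k A ρM ∧
    ydLHS k A ωM ρM = hopfRHS k A ωM ρM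

/-- `(M, ωM, ρM)` is a left-right Hopf module over `A`. -/
def IsHopfModule (ωM : A ⊗[k] M →ₗ[k] M) (ρM : M →ₗ[k] M ⊗[k] A) : Prop :=
  IsModule k A ωM ∧ IsComodule k A ρM ∧
    ρM.comp ωM = hopfRHS k A ωM ρM

end Structures


section Free

variable (k : Type) [Field k] (A : Type) [Ring A] [Bialgebra k A]
variable (V : Type) [AddCommGroup V] [Module k V]

/-- The free Hopf-module action on `V ⊗ A`: `a · (v ⊗ b) = v ⊗ ab`. -/
def ωFree : A ⊗[k] (V ⊗[k] A) →ₗ[k] V ⊗[k] A :=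
  (TensorProduct.map (LinearMap.id : V →ₗ[k] V) (μA k A)).comp
    (TensorProduct.leftComm k A V A).toLinearMap

/-- The free Hopf-module coaction on `V ⊗ A`: `ρ(v ⊗ a) = Σ v ⊗ a_1 ⊗ a_2`. -/
def ρFree : V ⊗[k] A →ₗ[k] (V ⊗[k] A) ⊗[k] A :=
  ((TensorProduct.assoc k V A A).symm.toLinearMap).comp
    (TensorProduct.map (LinearMap.id : V →ₗ[k] V) (ΔA k A))

end Free

section Total

variable (k : Type) [Field k] (A : Type) [Ring A] [Bialgebra k A]
variable (M N : Type) [AddCommGroup M] [Module k M] [AddCommGroup N] [Module k N]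
variable (ωM : A ⊗[k] M →ₗ[k] M) (ρM : M →ₗ[k] M ⊗[k] A)
variable (ωN : A ⊗[k] N →ₗ[k] N) (ρN : N →ₗ[k] N ⊗[k] A)

/-- Degree-`q` part of the total complex of the Hopf-module bicomplex:
`⊕_{n+p=q} C^{n,p}(M,N)`. -/
def TotH (q : ℕ) : Type := ∀ (n p : ℕ), n + p = q → Yc k A M N n p

instance (q : ℕ) : Zero (TotH k A M N q) := ⟨fun _ _ _ => 0⟩

/-- The total differential `D = d_m + (-1)^n d_c`. -/
def DH (q : ℕ) (x : TotH k A M N q) : TotH k A M N (q+1) := fun n p h =>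
  (match n, h with
    | 0, _ => 0
    | n'+1, h => dmH k A ωM ωN n' p (x n' p (by omega))) +
  (match p, h with
    | 0, _ => 0
    | p'+1, h => ((-1 : ℤ)^n) • dcH k A ρM ρN n p' (x n p' (by omega)))

/-- `S` is a skew antipode for the bialgebra `A`:
`Σ S(a_2)a_1 = Σ a_2 S(a_1) = ε(a)1`. -/
def IsSkewAntipode (S : A →ₗ[k] A) : Prop :=
  (μA k A).comp ((TensorProduct.map S (LinearMap.id : A →ₗ[k] A)).comp
      (((TensorProduct.comm k A A).toLinearMap).comp (ΔA k A))) =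
    (Algebra.linearMap k A).comp (εA k A) ∧
  (μA k A).comp ((TensorProduct.map (LinearMap.id : A →ₗ[k] A) S).comp
      (((TensorProduct.comm k A A).toLinearMap).comp (ΔA k A))) =
    (Algebra.linearMap k A).comp (εA k A)

end Total

section Coinv

variable (k : Type) [Field k] (A : Type) [Ring A] [Bialgebra k A]
variable (M : Type) [AddCommGroup M] [Module k M]

/-- `m ↦ m ⊗ 1 : M → M ⊗ A`. -/
def tensOne : M →ₗ[k] M ⊗[k] A :=
  (TensorProduct.map (LinearMap.id : M →ₗ[k] M) (Algebra.linearMap k A)).comp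
    (TensorProduct.rid k M).symm.toLinearMap

/-- The coinvariants `M^{co A} = {m ∈ M : ρ(m) = m ⊗ 1}` of a right comodule. -/
def coinv (ρM : M →ₗ[k] M ⊗[k] A) : Submodule k M :=
  LinearMap.ker (ρM - tensOne k A M)

end Coinv



section ConvAux

open Coalgebra

variable {k : Type} [Field k]

section Conv
variable {C B : Type} [AddCommMonoid C] [Module k C] [Coalgebra k C]
  [Semiring B] [Algebra k B]

/-- Convolution with flipped comultiplication. -/
def convOp (f g : C →ₗ[k] B) : C →ₗ[k] B :=
  (LinearMap.mul' k B) ∘ₗ (TensorProduct.map f g) ∘ₗ (TensorProduct.comm k C C).toLinearMap ∘ₗ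
    (Coalgebra.comul : C →ₗ[k] C ⊗[k] C)

lemma convOp_apply (f g : C →ₗ[k] B) {c : C} {ι : Type*} (r : Coalgebra.Repr k c ι) :
    convOp f g c = ∑ i ∈ r.index, f (r.right i) * g (r.left i) := by
  simp only [convOp, LinearMap.coe_comp, Function.comp_apply, LinearEquiv.coe_coe, ← r.eq,
    map_sum, TensorProduct.comm_tmul, TensorProduct.map_tmul, LinearMap.mul'_apply]

lemma sum_counit_smul {a : C} {ι : Type*} (r : Coalgebra.Repr k a ι) :
    ∑ i ∈ r.index, counit (R := k) (r.left i) • r.right i = a :=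
  calc ∑ i ∈ r.index, counit (R := k) (r.left i) • r.right i
      = TensorProduct.lid k C (∑ i ∈ r.index, counit (R := k) (r.left i) ⊗ₜ r.right i) := by
        rw [map_sum]; simp
    _ = TensorProduct.lid k C ((1 : k) ⊗ₜ a) := by rw [Coalgebra.sum_counit_tmul_eq r]
    _ = a := by simp

lemma sum_smul_counit {a : C} {ι : Type*} (r : Coalgebra.Repr k a ι) :
    ∑ i ∈ r.index, counit (R := k) (r.right i) • r.left i = a :=
  calc ∑ i ∈ r.index, counit (R := k) (r.right i) • r.left i
      = TensorProduct.rid k C (∑ i ∈ r.index, r.left i ⊗ₜ counit (R := k) (r.right i)) := by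
        rw [map_sum]; simp
    _ = TensorProduct.rid k C (a ⊗ₜ (1 : k)) := by rw [Coalgebra.sum_tmul_counit_eq r]
    _ = a := by simp

/-- The convolution unit. -/
def convUnit : C →ₗ[k] B := (Algebra.linearMap k B) ∘ₗ (Coalgebra.counit : C →ₗ[k] k)

lemma convOp_unit_right (f : C →ₗ[k] B) : convOp f convUnit = f := by
  ext c
  rw [convOp_apply f _ (ℛ k c)]
  calc ∑ i ∈ (ℛ k c).index, f ((ℛ k c).right i) * convUnit ((ℛ k c).left i)
      = ∑ i ∈ (ℛ k c).index, counit (R := k) ((ℛ k c).left i) • f ((ℛ k c).right i) := by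
        simp [convUnit, Algebra.algebraMap_eq_smul_one, mul_smul_comm]
    _ = f (∑ i ∈ (ℛ k c).index, counit (R := k) ((ℛ k c).left i) • (ℛ k c).right i) := by
        rw [map_sum]; simp
    _ = f c := by rw [sum_counit_smul]

lemma convOp_unit_left (f : C →ₗ[k] B) : convOp convUnit f = f := by
  ext c
  rw [convOp_apply _ f (ℛ k c)]
  calc ∑ i ∈ (ℛ k c).index, convUnit ((ℛ k c).right i) * f ((ℛ k c).left i)
      = ∑ i ∈ (ℛ k c).index, counit (R := k) ((ℛ k c).right i) • f ((ℛ k c).left i) := by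
        simp [convUnit, Algebra.algebraMap_eq_smul_one, smul_mul_assoc]
    _ = f (∑ i ∈ (ℛ k c).index, counit (R := k) ((ℛ k c).right i) • (ℛ k c).left i) := by
        rw [map_sum]; simp
    _ = f c := by rw [sum_smul_counit]

lemma convOp_assoc (f g h : C →ₗ[k] B) :
    convOp (convOp f g) h = convOp f (convOp g h) := by
  ext c
  set r := ℛ k c with hr
  set a₁ : (i : C × C) → Coalgebra.Repr k (r.left i) (C × C) := fun i => ℛ k (r.left i) with ha₁
  set a₂ : (i : C × C) → Coalgebra.Repr k (r.right i) (C × C) := fun i => ℛ k (r.right i) with ha₂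
  have key := Coalgebra.sum_tmul_tmul_eq r a₁ a₂
  set T : C ⊗[k] (C ⊗[k] C) →ₗ[k] B :=
    (LinearMap.mul' k B) ∘ₗ
      (TensorProduct.map ((LinearMap.mul' k B) ∘ₗ TensorProduct.map f g) h) ∘ₗ
        (TensorProduct.comm k C (C ⊗[k] C)).toLinearMap ∘ₗ
          (TensorProduct.map LinearMap.id (TensorProduct.comm k C C).toLinearMap) with hT
  have hTt : ∀ x y z : C, T (x ⊗ₜ (y ⊗ₜ z)) = f z * g y * h x := by
    intro x y z
    simp [hT]
  have key2 := congrArg T key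
  simp only [map_sum, hTt] at key2
  rw [convOp_apply _ h r, convOp_apply f _ r]
  calc ∑ i ∈ r.index, (convOp f g) (r.right i) * h (r.left i)
      = ∑ i ∈ r.index, ∑ j ∈ (a₂ i).index,
          f ((a₂ i).right j) * g ((a₂ i).left j) * h (r.left i) := by
        refine Finset.sum_congr rfl fun i _ => ?_
        rw [convOp_apply f g (a₂ i), Finset.sum_mul]
    _ = ∑ i ∈ r.index, ∑ j ∈ (a₁ i).index,
          f (r.right i) * g ((a₁ i).right j) * h ((a₁ i).left j) := key2.symm
    _ = ∑ i ∈ r.index, f (r.right i) * (convOp g h) (r.left i) := by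
        refine Finset.sum_congr rfl fun i _ => ?_
        rw [convOp_apply g h (a₁ i), Finset.mul_sum]
        exact Finset.sum_congr rfl fun j _ => (mul_assoc _ _ _)

lemma convOp_left_cancel {x y : C →ₗ[k] B} (h1 : convOp x y = convUnit)
    (z : C →ₗ[k] B) : convOp x (convOp y z) = z := by
  rw [← convOp_assoc, h1, convOp_unit_left]

end Conv

end ConvAux

section Skew
open Coalgebra
variable {k : Type} [Field k] {A : Type} [Ring A] [Bialgebra k A] {S : A →ₗ[k] A}

lemma skew1_sum (hS : IsSkewAntipode k A S) {a : A} {ι : Type*} (r : Coalgebra.Repr k a ι) :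
    ∑ i ∈ r.index, S (r.right i) * r.left i
      = algebraMap k A (counit (R := k) a) := by
  have h := LinearMap.congr_fun hS.1 a
  simp only [LinearMap.coe_comp, Function.comp_apply, LinearEquiv.coe_coe,
    Algebra.linearMap_apply] at h
  rw [show (ΔA k A) a = Coalgebra.comul (R := k) a from rfl, ← r.eq] at h
  simpa [map_sum] using h

lemma skew2_sum (hS : IsSkewAntipode k A S) {a : A} {ι : Type*} (r : Coalgebra.Repr k a ι) :
    ∑ i ∈ r.index, r.right i * S (r.left i)
      = algebraMap k A (counit (R := k) a) := by
  have h := LinearMap.congr_fun hS.2 a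
  simp only [LinearMap.coe_comp, Function.comp_apply, LinearEquiv.coe_coe,
    Algebra.linearMap_apply] at h
  rw [show (ΔA k A) a = Coalgebra.comul (R := k) a from rfl, ← r.eq] at h
  simpa [map_sum] using h

/-- `ι₁ : a ↦ a ⊗ 1`. -/
def iota1 : A →ₗ[k] A ⊗[k] A := (TensorProduct.mk k A A).flip 1
/-- `ι₂ : a ↦ 1 ⊗ a`. -/
def iota2 : A →ₗ[k] A ⊗[k] A := TensorProduct.mk k A A 1

@[simp] lemma iota1_apply (a : A) : (iota1 (k := k)) a = a ⊗ₜ (1 : A) := rfl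
@[simp] lemma iota2_apply (a : A) : (iota2 (k := k)) a = (1 : A) ⊗ₜ a := rfl

lemma convOp_comulS_comul (hS : IsSkewAntipode k A S) :
    convOp ((Coalgebra.comul : A →ₗ[k] A ⊗[k] A) ∘ₗ S) Coalgebra.comul
      = convUnit := by
  ext a
  rw [convOp_apply _ _ (ℛ k a)]
  calc ∑ i ∈ (ℛ k a).index,
        ((Coalgebra.comul : A →ₗ[k] A ⊗[k] A) ∘ₗ S) ((ℛ k a).right i)
          * Coalgebra.comul ((ℛ k a).left i)
      = ∑ i ∈ (ℛ k a).index,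
          Coalgebra.comul (R := k) (S ((ℛ k a).right i) * (ℛ k a).left i) := by
        simp [Bialgebra.comul_mul]
    _ = Coalgebra.comul (R := k)
          (∑ i ∈ (ℛ k a).index, S ((ℛ k a).right i) * (ℛ k a).left i) := by
        rw [map_sum]
    _ = Coalgebra.comul (R := k) (algebraMap k A (counit (R := k) a)) := by
        rw [skew1_sum hS (ℛ k a)]
    _ = convUnit a := by
        simp [convUnit, Bialgebra.comul_algebraMap]

lemma convOp_comul_iota1S (hS : IsSkewAntipode k A S) :
    convOp (Coalgebra.comul : A →ₗ[k] A ⊗[k] A) ((iota1 : A →ₗ[k] A ⊗[k] A) ∘ₗ S)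
      = iota2 := by
  ext a
  rw [convOp_apply _ _ (ℛ k a)]
  set r := ℛ k a with hrdef
  set a₁ : (i : A × A) → Coalgebra.Repr k (r.left i) (A × A) := fun i => ℛ k (r.left i) with ha₁
  set a₂ : (i : A × A) → Coalgebra.Repr k (r.right i) (A × A) := fun i => ℛ k (r.right i) with ha₂
  have key := Coalgebra.sum_tmul_tmul_eq r a₁ a₂
  set T : A ⊗[k] (A ⊗[k] A) →ₗ[k] A ⊗[k] A :=
    (TensorProduct.map (LinearMap.mul' k A) LinearMap.id) ∘ₗ
      (TensorProduct.assoc k A A A).symm.toLinearMap ∘ₗ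
        (TensorProduct.map LinearMap.id (TensorProduct.map S LinearMap.id)) ∘ₗ
          (TensorProduct.leftComm k A A A).toLinearMap with hT
  have hTt : ∀ x y z : A, T (x ⊗ₜ (y ⊗ₜ z)) = (y * S x) ⊗ₜ z := by
    intro x y z; simp [hT]
  have key2 := congrArg T key
  simp only [map_sum, hTt] at key2
  calc ∑ i ∈ r.index, Coalgebra.comul (R := k) (r.right i)
          * ((iota1 : A →ₗ[k] A ⊗[k] A) ∘ₗ S) (r.left i)
      = ∑ i ∈ r.index, ∑ j ∈ (a₂ i).index,
          ((a₂ i).left j * S (r.left i)) ⊗ₜ (a₂ i).right j := by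
        refine Finset.sum_congr rfl fun i _ => ?_
        rw [← (a₂ i).eq, Finset.sum_mul]
        simp [Algebra.TensorProduct.tmul_mul_tmul]
    _ = ∑ i ∈ r.index, ∑ j ∈ (a₁ i).index,
          ((a₁ i).right j * S ((a₁ i).left j)) ⊗ₜ r.right i := key2.symm
    _ = ∑ i ∈ r.index, (algebraMap k A (counit (R := k) (r.left i))) ⊗ₜ r.right i := by
        refine Finset.sum_congr rfl fun i _ => ?_
        rw [← TensorProduct.sum_tmul, skew2_sum hS (a₁ i)]
    _ = (1 : A) ⊗ₜ a := by
        simp only [Algebra.algebraMap_eq_smul_one, TensorProduct.smul_tmul]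
        rw [← TensorProduct.tmul_sum, sum_counit_smul r]
    _ = iota2 a := rfl

lemma convOp_comulS_iota2 (hS : IsSkewAntipode k A S) :
    convOp ((Coalgebra.comul : A →ₗ[k] A ⊗[k] A) ∘ₗ S) iota2
      = (iota1 : A →ₗ[k] A ⊗[k] A) ∘ₗ S := by
  rw [← convOp_comul_iota1S hS, convOp_left_cancel (convOp_comulS_comul hS)]

/-- Elementwise form of the key identity `Σ (S a₂)₁ ⊗ (S a₂)₂ a₁ = S a ⊗ 1`. -/
lemma skew_key {a : A} (hS : IsSkewAntipode k A S) {ι : Type*} (r : Coalgebra.Repr k a ι) :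
    ∑ i ∈ r.index, Coalgebra.comul (R := k) (S (r.right i)) * ((1 : A) ⊗ₜ r.left i)
      = S a ⊗ₜ (1 : A) := by
  have h := LinearMap.congr_fun (convOp_comulS_iota2 hS) a
  rw [convOp_apply _ _ r] at h
  simpa using h

end Skew

-- ===== main development =====
section Main
open Coalgebra

variable {k : Type} [Field k] {A : Type} [Ring A] [Bialgebra k A] {S : A →ₗ[k] A}
variable {M : Type} [AddCommGroup M] [Module k M]
variable {ωM : A ⊗[k] M →ₗ[k] M} {ρM : M →ₗ[k] M ⊗[k] A}

lemma tensOne_apply (m : M) : tensOne k A M m = m ⊗ₜ (1 : A) := by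
  simp [tensOne]

lemma mem_coinv {m : M} : m ∈ coinv k A M ρM ↔ ρM m = m ⊗ₜ (1 : A) := by
  rw [coinv, LinearMap.mem_ker, LinearMap.sub_apply, sub_eq_zero, tensOne_apply]

/-- The coinvariants projection `P m = Σ S(m₁)·m₀`. -/
def Pmap (S : A →ₗ[k] A) (ωM : A ⊗[k] M →ₗ[k] M) (ρM : M →ₗ[k] M ⊗[k] A) : M →ₗ[k] M :=
  ωM ∘ₗ (TensorProduct.map S LinearMap.id) ∘ₗ (TensorProduct.comm k M A).toLinearMap ∘ₗ ρM

lemma hopfRHS_tmul_of_coinv {m : M} (hm : ρM m = m ⊗ₜ (1 : A)) {a : A}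
    {ι : Type*} (r : Coalgebra.Repr k a ι) :
    hopfRHS k A ωM ρM (a ⊗ₜ m)
      = ∑ i ∈ r.index, ωM (r.left i ⊗ₜ m) ⊗ₜ r.right i := by
  simp only [hopfRHS, LinearMap.coe_comp, Function.comp_apply, LinearEquiv.coe_coe,
    TensorProduct.map_tmul, LinearMap.id_coe, id_eq, hm]
  rw [show (ΔA k A) a = Coalgebra.comul (R := k) a from rfl, ← r.eq]
  simp only [TensorProduct.sum_tmul, map_sum, TensorProduct.tensorTensorTensorComm_tmul,
    TensorProduct.map_tmul, LinearMap.mul'_apply, mul_one]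

lemma hopf_apply (hM : IsHopfModule k A ωM ρM) (a : A) (m : M) :
    ρM (ωM (a ⊗ₜ m)) = hopfRHS k A ωM ρM (a ⊗ₜ m) :=
  LinearMap.congr_fun hM.2.2 (a ⊗ₜ m)

lemma comodule_coassoc_sum (hM : IsComodule k A ρM) (x : M)
    {ι : Type} {s : Finset ι} {n : ι → M} {c : ι → A}
    (hs : ρM x = ∑ p ∈ s, n p ⊗ₜ c p) :
    ∑ p ∈ s, ρM (n p) ⊗ₜ c p
      = ∑ p ∈ s, (TensorProduct.assoc k M A A).symm (n p ⊗ₜ Coalgebra.comul (R := k) (c p)) := by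
  have h := LinearMap.congr_fun hM.2 x
  simp only [LinearMap.coe_comp, Function.comp_apply, LinearEquiv.coe_coe, hs, map_sum,
    TensorProduct.map_tmul, LinearMap.id_coe, id_eq] at h
  exact h

lemma comodule_counit_sum (hM : IsComodule k A ρM) (x : M)
    {ι : Type} {s : Finset ι} {n : ι → M} {c : ι → A}
    (hs : ρM x = ∑ p ∈ s, n p ⊗ₜ c p) :
    ∑ p ∈ s, counit (R := k) (c p) • n p = x := by
  have h := LinearMap.congr_fun hM.1 x
  simp only [LinearMap.coe_comp, Function.comp_apply, LinearEquiv.coe_coe, hs, map_sum,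
    TensorProduct.map_tmul, LinearMap.id_coe, id_eq, TensorProduct.rid_tmul,
    LinearMap.id_apply] at h
  exact h

/-- `P(b·m) = ε(b) m` for coinvariant `m`. -/
lemma Pmap_omega_coinv (hS : IsSkewAntipode k A S) (hM : IsHopfModule k A ωM ρM)
    (b : A) {m : M} (hm : ρM m = m ⊗ₜ (1 : A)) :
    Pmap S ωM ρM (ωM (b ⊗ₜ m)) = counit (R := k) b • m := by
  have h1 : ρM (ωM (b ⊗ₜ m)) = ∑ i ∈ (ℛ k b).index, ωM ((ℛ k b).left i ⊗ₜ m) ⊗ₜ (ℛ k b).right i := by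
    rw [hopf_apply hM, hopfRHS_tmul_of_coinv hm (ℛ k b)]
  calc Pmap S ωM ρM (ωM (b ⊗ₜ m))
      = ∑ i ∈ (ℛ k b).index, ωM (S ((ℛ k b).right i) ⊗ₜ ωM ((ℛ k b).left i ⊗ₜ m)) := by
        simp only [Pmap, LinearMap.coe_comp, Function.comp_apply, LinearEquiv.coe_coe, h1,
          map_sum, TensorProduct.comm_tmul, TensorProduct.map_tmul, LinearMap.id_coe, id_eq]
    _ = ∑ i ∈ (ℛ k b).index, ωM ((S ((ℛ k b).right i) * (ℛ k b).left i) ⊗ₜ m) := by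
        exact Finset.sum_congr rfl fun i _ => hM.1.2 _ _ _
    _ = ωM ((∑ i ∈ (ℛ k b).index, S ((ℛ k b).right i) * (ℛ k b).left i) ⊗ₜ m) := by
        rw [TensorProduct.sum_tmul, map_sum]
    _ = ωM ((algebraMap k A (counit (R := k) b)) ⊗ₜ m) := by rw [skew1_sum hS]
    _ = counit (R := k) b • m := by
        rw [Algebra.algebraMap_eq_smul_one, ← TensorProduct.smul_tmul', map_smul, hM.1.1]

/-- Claim 1: `P` lands in the coinvariants. -/
lemma Pmap_mem_coinv (hS : IsSkewAntipode k A S) (hM : IsHopfModule k A ωM ρM) (x : M) :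
    Pmap S ωM ρM x ∈ coinv k A M ρM := by
  rw [mem_coinv]
  obtain ⟨s, hs⟩ := TensorProduct.exists_finset (ρM x)
  have hPx : Pmap S ωM ρM x = ∑ p ∈ s, ωM (S p.2 ⊗ₜ p.1) := by
    simp only [Pmap, LinearMap.coe_comp, Function.comp_apply, LinearEquiv.coe_coe, hs, map_sum,
      TensorProduct.comm_tmul, TensorProduct.map_tmul, LinearMap.id_coe, id_eq]
  set H : (M ⊗[k] A) ⊗[k] A →ₗ[k] M ⊗[k] A :=
    (TensorProduct.map ωM (LinearMap.mul' k A)) ∘ₗ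
      (TensorProduct.tensorTensorTensorComm k A A M A).toLinearMap ∘ₗ
        (TensorProduct.map ((Coalgebra.comul : A →ₗ[k] A ⊗[k] A) ∘ₗ S) LinearMap.id) ∘ₗ
          (TensorProduct.comm k (M ⊗[k] A) A).toLinearMap with hH
  set W : M ⊗[k] (A ⊗[k] A) →ₗ[k] M ⊗[k] A :=
    (TensorProduct.map ωM LinearMap.id) ∘ₗ
      (TensorProduct.map (TensorProduct.comm k M A).toLinearMap LinearMap.id) ∘ₗ
        (TensorProduct.assoc k M A A).symm.toLinearMap with hW
  have hHρ : ∀ (n : M) (c : A), H (ρM n ⊗ₜ c) = hopfRHS k A ωM ρM (S c ⊗ₜ n) := by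
    intro n c
    simp only [hH, hopfRHS, LinearMap.coe_comp, Function.comp_apply, LinearEquiv.coe_coe,
      TensorProduct.comm_tmul, TensorProduct.map_tmul, LinearMap.id_coe, id_eq]
  have hHW : ∀ (n : M) (d c : A),
      H ((n ⊗ₜ d) ⊗ₜ c) = W (n ⊗ₜ (Coalgebra.comul (R := k) (S c) * ((1 : A) ⊗ₜ d))) := by
    intro n d c
    obtain ⟨t, ht⟩ := TensorProduct.exists_finset (Coalgebra.comul (R := k) (S c))
    have hmul : Coalgebra.comul (R := k) (S c) * ((1 : A) ⊗ₜ d)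
        = ∑ q ∈ t, q.1 ⊗ₜ (q.2 * d) := by
      rw [ht, Finset.sum_mul]
      exact Finset.sum_congr rfl fun q _ => by
        rw [Algebra.TensorProduct.tmul_mul_tmul, mul_one]
    rw [hmul]
    simp only [hH, hW, LinearMap.coe_comp, Function.comp_apply, LinearEquiv.coe_coe,
      TensorProduct.comm_tmul, TensorProduct.map_tmul, LinearMap.id_coe, id_eq, ht,
      TensorProduct.sum_tmul, TensorProduct.tmul_sum, map_sum,
      TensorProduct.tensorTensorTensorComm_tmul, LinearMap.mul'_apply,
      TensorProduct.assoc_symm_tmul]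
  have hρP : ρM (Pmap S ωM ρM x) = H (∑ p ∈ s, ρM p.1 ⊗ₜ p.2) := by
    rw [hPx, map_sum, map_sum]
    exact Finset.sum_congr rfl fun p _ => by rw [hHρ, ← hopf_apply hM]
  rw [hρP, comodule_coassoc_sum hM.2.1 x hs]
  have key : ∀ (n : M) (c : A),
      H ((TensorProduct.assoc k M A A).symm (n ⊗ₜ Coalgebra.comul (R := k) c))
        = ωM (S c ⊗ₜ n) ⊗ₜ (1 : A) := by
    intro n c
    rw [show Coalgebra.comul (R := k) c = ∑ i ∈ (ℛ k c).index, (ℛ k c).left i ⊗ₜ (ℛ k c).right i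
      from ((ℛ k c).eq).symm]
    rw [TensorProduct.tmul_sum, map_sum, map_sum]
    calc ∑ i ∈ (ℛ k c).index, H ((TensorProduct.assoc k M A A).symm (n ⊗ₜ ((ℛ k c).left i ⊗ₜ (ℛ k c).right i)))
        = ∑ i ∈ (ℛ k c).index, W (n ⊗ₜ (Coalgebra.comul (R := k) (S ((ℛ k c).right i)) * ((1 : A) ⊗ₜ (ℛ k c).left i))) := by
          exact Finset.sum_congr rfl fun i _ => by
            rw [TensorProduct.assoc_symm_tmul, hHW]
      _ = W (n ⊗ₜ ∑ i ∈ (ℛ k c).index, Coalgebra.comul (R := k) (S ((ℛ k c).right i)) * ((1 : A) ⊗ₜ (ℛ k c).left i)) := by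
          rw [TensorProduct.tmul_sum, map_sum]
      _ = W (n ⊗ₜ (S c ⊗ₜ (1 : A))) := by rw [skew_key hS (ℛ k c)]
      _ = ωM (S c ⊗ₜ n) ⊗ₜ (1 : A) := by
          simp only [hW, LinearMap.coe_comp, Function.comp_apply, LinearEquiv.coe_coe,
            TensorProduct.assoc_symm_tmul, TensorProduct.map_tmul, TensorProduct.comm_tmul,
            LinearMap.id_coe, id_eq]
  rw [map_sum]
  calc ∑ p ∈ s, H ((TensorProduct.assoc k M A A).symm (p.1 ⊗ₜ Coalgebra.comul (R := k) p.2))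
      = ∑ p ∈ s, ωM (S p.2 ⊗ₜ p.1) ⊗ₜ (1 : A) := Finset.sum_congr rfl fun p _ => key p.1 p.2
    _ = Pmap S ωM ρM x ⊗ₜ (1 : A) := by rw [hPx, TensorProduct.sum_tmul]


/-- `G((n ⊗ d) ⊗ c) = (c * S d) · n`. -/
def Gmap (S : A →ₗ[k] A) (ωM : A ⊗[k] M →ₗ[k] M) : (M ⊗[k] A) ⊗[k] A →ₗ[k] M :=
  ωM ∘ₗ
    (TensorProduct.map ((LinearMap.mul' k A) ∘ₗ (TensorProduct.map LinearMap.id S))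
      LinearMap.id) ∘ₗ
      (TensorProduct.assoc k A A M).symm.toLinearMap ∘ₗ
        (TensorProduct.map LinearMap.id (TensorProduct.comm k M A).toLinearMap) ∘ₗ
          (TensorProduct.comm k (M ⊗[k] A) A).toLinearMap

lemma Gmap_tmul (n : M) (d c : A) : Gmap S ωM ((n ⊗ₜ d) ⊗ₜ c) = ωM ((c * S d) ⊗ₜ n) := by
  simp [Gmap]

lemma Gmap_rho (hM : IsHopfModule k A ωM ρM) (z : M ⊗[k] A) (c : A) :
    Gmap S ωM (z ⊗ₜ c)
      = ωM (c ⊗ₜ ωM ((TensorProduct.map S LinearMap.id) ((TensorProduct.comm k M A) z))) := by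
  induction z using TensorProduct.induction_on with
  | zero => simp
  | tmul n d =>
      rw [Gmap_tmul]
      simp only [TensorProduct.comm_tmul, TensorProduct.map_tmul, LinearMap.id_coe, id_eq]
      rw [hM.1.2]
  | add u w hu hw =>
      simp only [TensorProduct.add_tmul, map_add, hu, hw, TensorProduct.tmul_add]

lemma Gmap_coassoc (hS : IsSkewAntipode k A S) (hM : IsHopfModule k A ωM ρM)
    (n : M) (c : A) :
    Gmap S ωM ((TensorProduct.assoc k M A A).symm (n ⊗ₜ Coalgebra.comul (R := k) c))
      = counit (R := k) c • n := by
  rw [show Coalgebra.comul (R := k) c = ∑ i ∈ (ℛ k c).index, (ℛ k c).left i ⊗ₜ (ℛ k c).right i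
    from ((ℛ k c).eq).symm]
  rw [TensorProduct.tmul_sum, map_sum, map_sum]
  calc ∑ i ∈ (ℛ k c).index,
        Gmap S ωM ((TensorProduct.assoc k M A A).symm (n ⊗ₜ ((ℛ k c).left i ⊗ₜ (ℛ k c).right i)))
      = ∑ i ∈ (ℛ k c).index, ωM (((ℛ k c).right i * S ((ℛ k c).left i)) ⊗ₜ n) := by
        exact Finset.sum_congr rfl fun i _ => by
          rw [TensorProduct.assoc_symm_tmul, Gmap_tmul]
    _ = ωM ((∑ i ∈ (ℛ k c).index, (ℛ k c).right i * S ((ℛ k c).left i)) ⊗ₜ n) := by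
        rw [TensorProduct.sum_tmul, map_sum]
    _ = ωM ((algebraMap k A (counit (R := k) c)) ⊗ₜ n) := by rw [skew2_sum hS]
    _ = counit (R := k) c • n := by
        rw [Algebra.algebraMap_eq_smul_one, ← TensorProduct.smul_tmul', map_smul, hM.1.1]

end Main

/-- fundamental theorem of Hopf modules, left-right version.
If `A` is a bialgebra with a skew antipode and `M` is a left-right Hopf module over
`A`, then `M ≅ M^{co A} ⊗ A` as left-right Hopf modules, where `M^{co A} ⊗ A` carries
the free structure `a·(v ⊗ b) = v ⊗ ab`, `ρ(v ⊗ a) = Σ v ⊗ a_1 ⊗ a_2`. -/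
theorem hopf_module_fundamental (k : Type) [Field k] (A : Type) [Ring A]
    [Bialgebra k A] (S : A →ₗ[k] A) (hS : IsSkewAntipode k A S)
    (M : Type) [AddCommGroup M] [Module k M]
    (ωM : A ⊗[k] M →ₗ[k] M) (ρM : M →ₗ[k] M ⊗[k] A)
    (hM : IsHopfModule k A ωM ρM) :
    ∃ e : ((coinv k A M ρM : Submodule k M) ⊗[k] A) ≃ₗ[k] M,
      e.toLinearMap.comp (ωFree k A (coinv k A M ρM)) =
        ωM.comp (TensorProduct.map (LinearMap.id : A →ₗ[k] A) e.toLinearMap) ∧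
      ρM.comp e.toLinearMap =
        (TensorProduct.map e.toLinearMap (LinearMap.id : A →ₗ[k] A)).comp
          (ρFree k A (coinv k A M ρM)) := by
  classical
  open Coalgebra in
  set V := coinv k A M ρM with hVdef
  set P' : M →ₗ[k] V := LinearMap.codRestrict V (Pmap S ωM ρM) (Pmap_mem_coinv hS hM)
    with hP'def
  set φ : (V ⊗[k] A) →ₗ[k] M :=
    ωM ∘ₗ (TensorProduct.map LinearMap.id V.subtype) ∘ₗ (TensorProduct.comm k V A).toLinearMap
    with hφdef
  set ψ : M →ₗ[k] V ⊗[k] A := (TensorProduct.map P' LinearMap.id) ∘ₗ ρM with hψdef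
  have hφt : ∀ (v : V) (a : A), φ (v ⊗ₜ a) = ωM (a ⊗ₜ (v : M)) := by
    intro v a
    simp [hφdef]
  have hmem : ∀ v : V, ρM (v : M) = (v : M) ⊗ₜ (1 : A) := fun v => mem_coinv.mp v.2
  have h1 : φ ∘ₗ ψ = LinearMap.id := by
    apply LinearMap.ext
    intro m
    obtain ⟨s, hs⟩ := TensorProduct.exists_finset (ρM m)
    rw [LinearMap.comp_apply, LinearMap.id_apply]
    calc φ (ψ m)
        = ∑ p ∈ s, φ (P' p.1 ⊗ₜ p.2) := by
          simp only [hψdef, LinearMap.coe_comp, Function.comp_apply, hs, map_sum,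
            TensorProduct.map_tmul, LinearMap.id_coe, id_eq]
      _ = ∑ p ∈ s, ωM (p.2 ⊗ₜ Pmap S ωM ρM p.1) := by
          exact Finset.sum_congr rfl fun p _ => by rw [hφt]; rfl
      _ = ∑ p ∈ s, Gmap S ωM (ρM p.1 ⊗ₜ p.2) := by
          exact Finset.sum_congr rfl fun p _ => by
            rw [Gmap_rho hM]
            rfl
      _ = Gmap S ωM (∑ p ∈ s, ρM p.1 ⊗ₜ p.2) := by rw [map_sum]
      _ = ∑ p ∈ s, Gmap S ωM ((TensorProduct.assoc k M A A).symm
            (p.1 ⊗ₜ Coalgebra.comul (R := k) p.2)) := by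
          rw [comodule_coassoc_sum hM.2.1 m hs, map_sum]
      _ = ∑ p ∈ s, Coalgebra.counit (R := k) p.2 • p.1 :=
          Finset.sum_congr rfl fun p _ => Gmap_coassoc hS hM p.1 p.2
      _ = m := comodule_counit_sum hM.2.1 m hs
  have h2 : ψ ∘ₗ φ = LinearMap.id := by
    apply TensorProduct.ext'
    intro v a
    rw [LinearMap.comp_apply, LinearMap.id_apply, hφt]
    have hρ : ρM (ωM (a ⊗ₜ (v : M)))
        = ∑ i ∈ (ℛ k a).index, ωM ((ℛ k a).left i ⊗ₜ (v : M)) ⊗ₜ (ℛ k a).right i := by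
      rw [hopf_apply hM, hopfRHS_tmul_of_coinv (hmem v) (ℛ k a)]
    calc ψ (ωM (a ⊗ₜ (v : M)))
        = ∑ i ∈ (ℛ k a).index, P' (ωM ((ℛ k a).left i ⊗ₜ (v : M))) ⊗ₜ (ℛ k a).right i := by
          simp only [hψdef, LinearMap.coe_comp, Function.comp_apply, hρ, map_sum,
            TensorProduct.map_tmul, LinearMap.id_coe, id_eq]
      _ = ∑ i ∈ (ℛ k a).index,
            (Coalgebra.counit (R := k) ((ℛ k a).left i) • v) ⊗ₜ (ℛ k a).right i := by
          refine Finset.sum_congr rfl fun i _ => ?_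
          congr 1
          apply Subtype.ext
          rw [hP'def, LinearMap.codRestrict_apply, Pmap_omega_coinv hS hM _ (hmem v)]
          rfl
      _ = v ⊗ₜ (∑ i ∈ (ℛ k a).index,
            Coalgebra.counit (R := k) ((ℛ k a).left i) • (ℛ k a).right i) := by
          rw [TensorProduct.tmul_sum]
          exact Finset.sum_congr rfl fun i _ => TensorProduct.smul_tmul _ _ _
      _ = v ⊗ₜ a := by rw [sum_counit_smul (ℛ k a)]
  refine ⟨LinearEquiv.ofLinear φ ψ h1 h2, ?_, ?_⟩
  · rw [show (LinearEquiv.ofLinear φ ψ h1 h2).toLinearMap = φ from rfl]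
    apply TensorProduct.ext'
    intro a z
    induction z using TensorProduct.induction_on with
    | zero => simp
    | tmul v b =>
        show φ (ωFree k A (↥V) (a ⊗ₜ (v ⊗ₜ b)))
          = ωM ((TensorProduct.map LinearMap.id φ) (a ⊗ₜ (v ⊗ₜ b)))
        rw [show ωFree k A (↥V) (a ⊗ₜ (v ⊗ₜ b)) = v ⊗ₜ (a * b) by
          simp [ωFree]]
        rw [TensorProduct.map_tmul, LinearMap.id_coe, id_eq, hφt, hφt, hM.1.2]
    | add u w hu hw =>
        show (φ ∘ₗ ωFree k A (↥V)) (a ⊗ₜ (u + w))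
          = (ωM ∘ₗ TensorProduct.map LinearMap.id φ) (a ⊗ₜ (u + w))
        rw [TensorProduct.tmul_add, map_add, map_add, hu, hw]
  · rw [show (LinearEquiv.ofLinear φ ψ h1 h2).toLinearMap = φ from rfl]
    apply TensorProduct.ext'
    intro v a
    show ρM (φ (v ⊗ₜ a))
      = (TensorProduct.map φ LinearMap.id) (ρFree k A (↥V) (v ⊗ₜ a))
    rw [hφt, hopf_apply hM, hopfRHS_tmul_of_coinv (hmem v) (ℛ k a)]
    rw [show ρFree k A (↥V) (v ⊗ₜ a)
        = (TensorProduct.assoc k (↥V) A A).symm (v ⊗ₜ Coalgebra.comul (R := k) a) by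
      simp [ρFree]]
    rw [show Coalgebra.comul (R := k) a
        = ∑ i ∈ (ℛ k a).index, (ℛ k a).left i ⊗ₜ (ℛ k a).right i from ((ℛ k a).eq).symm]
    rw [TensorProduct.tmul_sum, map_sum, map_sum]
    exact Finset.sum_congr rfl fun i _ => by
      rw [TensorProduct.assoc_symm_tmul, TensorProduct.map_tmul, hφt]
      rfl


end PS
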